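/- Let M_L = [[1,1],[0,1]] and M_R = [[1,0],[1,1]]. Suppose ℓ, ℓ' ≥ 1 and m_1, n_1, …, m_ℓ, n_ℓ and m'_1, n'_1, …, m'_{ℓ'}, n'_{ℓ'} are positive integers such that the products W = M_L^{m_1} · M_R^{n_1} · ⋯ · M_L^{m_ℓ} · M_R^{n_ℓ} and W' = M_L^{m'_1} · M_R^{n'_1} · ⋯ · M_L^{m'_{ℓ'}} · M_R^{n'_{ℓ'}} are conjugate in SL(2,ℤ). Then ℓ = ℓ' and the sequence of pairs ((m'_1, n'_1), …, (m'_ℓ, n'_ℓ)) is obtained from ((m_1, n_1), …, (m_ℓ, n_ℓ)) by a cyclic rotation. -/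

import Mathlib

open Matrix

/-- The matrix with rows (1,1) and (0,1). -/
def ML : Matrix (Fin 2) (Fin 2) ℤ := !![1, 1; 0, 1]

/-- The matrix with rows (1,0) and (1,1). -/
def MR : Matrix (Fin 2) (Fin 2) ℤ := !![1, 0; 1, 1]


namespace LRW

abbrev M2 := Matrix (Fin 2) (Fin 2) ℤ

/-- letter matrix: `true` is L, `false` is R -/
def mat (b : Bool) : M2 := bif b then ML else MR

def word (l : List Bool) : M2 := (l.map mat).prod

@[simp] lemma word_nil : word [] = 1 := rfl
@[simp] lemma word_cons (b : Bool) (l : List Bool) : word (b :: l) = mat b * word l := by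
  simp [word]
lemma word_append (u v : List Bool) : word (u ++ v) = word u * word v := by
  simp [word]

lemma det_mat (b : Bool) : (mat b).det = 1 := by
  cases b <;> simp [mat, ML, MR, Matrix.det_fin_two_of]

lemma det_word (l : List Bool) : (word l).det = 1 := by
  induction l with
  | nil => simp
  | cons b t ih => rw [word_cons, Matrix.det_mul, det_mat, ih, one_mul]

def NonnegM (M : M2) : Prop := ∀ i j, 0 ≤ M i j
def PosM (M : M2) : Prop := ∀ i j, 1 ≤ M i j

lemma nonneg_mat (b : Bool) : NonnegM (mat b) := by
  cases b <;> intro i j <;> fin_cases i <;> fin_cases j <;> simp [mat, ML, MR]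

lemma nonneg_one : NonnegM 1 := by
  intro i j; fin_cases i <;> fin_cases j <;> simp

lemma nonneg_mul {M N : M2} (hM : NonnegM M) (hN : NonnegM N) : NonnegM (M * N) := by
  intro i j
  rw [Matrix.mul_apply, Fin.sum_univ_two]
  have := hM i 0; have := hM i 1; have := hN 0 j; have := hN 1 j
  positivity

lemma nonneg_word (l : List Bool) : NonnegM (word l) := by
  induction l with
  | nil => exact nonneg_one
  | cons b t ih => rw [word_cons]; exact nonneg_mul (nonneg_mat b) ih

lemma pos_mul {M N : M2} (hM : PosM M) (hN : PosM N) : PosM (M * N) := by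
  intro i j
  rw [Matrix.mul_apply, Fin.sum_univ_two]
  have := hM i 0; have := hM i 1; have := hN 0 j; have := hN 1 j
  nlinarith

lemma pos_transpose {M : M2} (hM : PosM M) : PosM Mᵀ := fun i j => hM j i

lemma ML_pow (k : ℕ) : ML ^ k = !![1, (k:ℤ); 0, 1] := by
  induction k with
  | zero => simp [Matrix.one_fin_two]
  | succ k ih => rw [pow_succ, ih]; simp [ML, Matrix.mul_fin_two]; ring_nf

lemma MR_pow (k : ℕ) : MR ^ k = !![1, 0; (k:ℤ), 1] := by
  induction k with
  | zero => simp [Matrix.one_fin_two]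
  | succ k ih => rw [pow_succ, ih]; simp [MR, Matrix.mul_fin_two]; try ring_nf

lemma blk_pos {m n : ℕ} (hm : 0 < m) (hn : 0 < n) : PosM (ML ^ m * MR ^ n) := by
  rw [ML_pow, MR_pow]
  have hm' : (1:ℤ) ≤ m := by exact_mod_cast hm
  have hn' : (1:ℤ) ≤ n := by exact_mod_cast hn
  intro i j; fin_cases i <;> fin_cases j <;>
    simp [Matrix.mul_fin_two] <;> nlinarith

lemma pos_prod (l : List M2) (hne : l ≠ []) (h : ∀ M ∈ l, PosM M) : PosM l.prod := by
  induction l with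
  | nil => exact absurd rfl hne
  | cons M t ih =>
    rcases eq_or_ne t [] with rfl | ht
    · simpa using h M (by simp)
    · rw [List.prod_cons]
      exact pos_mul (h M (by simp)) (ih ht (fun N hN => h N (by simp [hN])))

end LRW
namespace LRW

/-- action of a matrix on a pair -/
def act (M : M2) (z : ℤ × ℤ) : ℤ × ℤ :=
  (M 0 0 * z.1 + M 0 1 * z.2, M 1 0 * z.1 + M 1 1 * z.2)

lemma act_mul (M N : M2) (z : ℤ × ℤ) : act (M * N) z = act M (act N z) := by
  simp only [act, Matrix.mul_apply, Fin.sum_univ_two, Prod.mk.injEq]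
  constructor <;> ring

lemma act_neg (M : M2) (z : ℤ × ℤ) : act M (-z) = -act M z := by
  simp only [act, Prod.fst_neg, Prod.snd_neg, Prod.neg_mk, Prod.mk.injEq]
  constructor <;> ring

@[simp] lemma act_one (z : ℤ × ℤ) : act 1 z = z := by
  simp [act, Matrix.one_apply]

/-- strictly positive pair -/
def SP (z : ℤ × ℤ) : Prop := 0 < z.1 ∧ 0 < z.2

lemma sp_act {B : M2} (hB : PosM B) {z : ℤ × ℤ} (hz : SP z) : SP (act B z) := by
  obtain ⟨h1, h2⟩ := hz
  have := hB 0 0; have := hB 0 1; have := hB 1 0; have := hB 1 1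
  constructor <;> simp only [act] <;> nlinarith

/-- orientation-flipped mixed image is impossible -/
lemma noflip {B : M2} (hB : PosM B) (hdet : B.det = 1) {x y : ℤ}
    (hx : 1 ≤ x) (hy : y ≤ -1)
    (h1 : (act B (x, y)).1 ≤ 0) (h2 : 0 ≤ (act B (x, y)).2) : False := by
  have a := hB 0 0; have b := hB 0 1; have c := hB 1 0; have d := hB 1 1
  rw [Matrix.det_fin_two] at hdet
  simp only [act] at h1 h2
  nlinarith [mul_le_mul_of_nonneg_left h1 (by linarith : (0:ℤ) ≤ B 1 1),
    mul_le_mul_of_nonneg_left h2 (by linarith : (0:ℤ) ≤ B 0 1)]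

/-- descent: mixed stays mixed only with smaller norm -/
lemma descent {B : M2} (hB : PosM B) (hdet : B.det = 1) {x y : ℤ}
    (hx : 1 ≤ x) (hy : y ≤ -1)
    (h1 : 0 ≤ (act B (x, y)).1) (h2 : (act B (x, y)).2 ≤ 0) :
    (act B (x, y)).1 - (act B (x, y)).2 < x - y := by
  have a := hB 0 0; have b := hB 0 1; have c := hB 1 0; have d := hB 1 1
  rw [Matrix.det_fin_two] at hdet
  simp only [act] at h1 h2 ⊢
  rcases le_or_gt (B 1 1) (B 0 1 + 1) with hcase | hcase
  · nlinarith [mul_nonneg (by linarith : (0:ℤ) ≤ B 0 1 + 1 - B 1 1)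
      (by linarith : (0:ℤ) ≤ -(B 1 0 * x + B 1 1 * y))]
  · nlinarith [mul_nonneg (by linarith : (0:ℤ) ≤ B 1 1 - B 0 1 - 1)
      (by linarith : (0:ℤ) ≤ B 0 0 * x + B 0 1 * y)]

lemma act_pow_succ (B : M2) (N : ℕ) (z : ℤ × ℤ) :
    act (B ^ (N + 1)) z = act B (act (B ^ N) z) := by
  rw [pow_succ', act_mul]

lemma act_pow_succ' (B : M2) (N : ℕ) (z : ℤ × ℤ) :
    act (B ^ (N + 1)) z = act (B ^ N) (act B z) := by
  rw [pow_succ, act_mul]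

lemma sp_stable {B : M2} (hB : PosM B) {z : ℤ × ℤ} {N : ℕ} (h : SP (act (B ^ N) z)) :
    ∀ n, N ≤ n → SP (act (B ^ n) z) := by
  have key : ∀ k, SP (act (B ^ (N + k)) z) := by
    intro k
    induction k with
    | zero => simpa using h
    | succ k ih => rw [← Nat.add_assoc, act_pow_succ]; exact sp_act hB ih
  intro n hn
  have : n = N + (n - N) := by omega
  rw [this]; exact key _

/-- Key dynamical lemma. -/
lemma eventually_signed_aux {B : M2} (hB : PosM B) (hdet : B.det = 1) :
    ∀ (k : ℕ) (z : ℤ × ℤ), z.1.natAbs + z.2.natAbs ≤ k → z ≠ 0 →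
      ∃ N, SP (act (B ^ N) z) ∨ SP (-act (B ^ N) z) := by
  intro k
  induction k with
  | zero =>
    rintro ⟨zx, zy⟩ hz hz0
    exfalso; apply hz0
    simp only [Prod.mk_eq_zero]
    omega
  | succ k ih =>
    rintro ⟨zx, zy⟩ hz hz0
    have a := hB 0 0; have b := hB 0 1; have c := hB 1 0; have d := hB 1 1
    rw [Ne, Prod.mk_eq_zero, not_and_or] at hz0
    -- helper for strictly mixed vectors (x ≥ 1, y ≤ -1)
    have main : ∀ x y : ℤ, x.natAbs + y.natAbs ≤ k + 1 → 1 ≤ x → y ≤ -1 →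
        ∃ N, SP (act (B ^ N) (x, y)) ∨ SP (-act (B ^ N) (x, y)) := by
      intro x y hωxy h1 h2
      rcases hEq : act B (x, y) with ⟨u1, u2⟩
      have hfst : (act B (x, y)).1 = u1 := by rw [hEq]
      have hsnd : (act B (x, y)).2 = u2 := by rw [hEq]
      have step : ∀ N, act (B ^ (N + 1)) (x, y) = act (B ^ N) (u1, u2) := by
        intro N; rw [act_pow_succ', hEq]
      have descend : 0 ≤ u1 → u2 ≤ 0 → (u1, u2) ≠ (0, 0) →
          ∃ N, SP (act (B ^ N) (x, y)) ∨ SP (-act (B ^ N) (x, y)) := by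
        intro hpos hneg hne
        have hd := descent hB hdet h1 h2 (hfst ▸ hpos) (hsnd ▸ hneg)
        rw [hfst, hsnd] at hd
        have hne' : ¬(u1 = 0 ∧ u2 = 0) := by
          intro hc; exact hne (by rw [hc.1, hc.2])
        obtain ⟨N, hN⟩ := ih (u1, u2) (by simp only; omega)
          (by simp only [Ne, Prod.mk_eq_zero]; exact hne')
        exact ⟨N + 1, by rw [step]; exact hN⟩
      rcases lt_trichotomy u1 0 with hc1 | hc1 | hc1 <;>
        rcases lt_trichotomy u2 0 with hc2 | hc2 | hc2
      · -- (-,-)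
        refine ⟨1, Or.inr ?_⟩
        rw [pow_one, hEq]
        exact ⟨by simp only [Prod.fst_neg]; omega, by simp only [Prod.snd_neg]; omega⟩
      · exact absurd (noflip hB hdet h1 h2 (by omega) (by omega)) id
      · exact absurd (noflip hB hdet h1 h2 (by omega) (by omega)) id
      · exact descend (by omega) (by omega) (by simp [Prod.ext_iff]; omega)
      · exact absurd (noflip hB hdet h1 h2 (by omega) (by omega)) id
      · exact absurd (noflip hB hdet h1 h2 (by omega) (by omega)) id
      · exact descend (by omega) (by omega) (by simp [Prod.ext_iff]; omega)
      · exact descend (by omega) (by omega) (by simp [Prod.ext_iff]; omega)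
      · -- (+,+)
        refine ⟨1, Or.inl ?_⟩
        rw [pow_one, hEq]
        exact ⟨hc1, hc2⟩
    rcases lt_trichotomy zx 0 with hx | hx | hx <;> rcases lt_trichotomy zy 0 with hy | hy | hy
    · refine ⟨0, Or.inr ?_⟩
      simp only [pow_zero, act_one]
      exact ⟨by simp only [Prod.fst_neg]; omega, by simp only [Prod.snd_neg]; omega⟩
    · -- (-,0) : one step to strictly negative
      refine ⟨1, Or.inr ?_⟩
      rw [pow_one]
      refine ⟨?_, ?_⟩ <;> simp only [act, Prod.fst_neg, Prod.snd_neg] <;> nlinarith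
    · -- (-,+) : apply main to the negation
      obtain ⟨N, hN⟩ := main (-zx) (-zy) (by omega) (by omega) (by omega)
      refine ⟨N, ?_⟩
      have : ((-zx : ℤ), (-zy : ℤ)) = -(zx, zy) := rfl
      rw [this, act_neg, neg_neg] at hN
      exact hN.symm
    · -- (0,-)
      refine ⟨1, Or.inr ?_⟩
      rw [pow_one]
      refine ⟨?_, ?_⟩ <;> simp only [act, Prod.fst_neg, Prod.snd_neg] <;> nlinarith
    · exact absurd hx (by tauto)
    · -- (0,+)
      refine ⟨1, Or.inl ?_⟩
      rw [pow_one]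
      refine ⟨?_, ?_⟩ <;> simp only [act] <;> nlinarith
    · -- (+,-)
      exact main zx zy hz (by omega) (by omega)
    · -- (+,0)
      refine ⟨1, Or.inl ?_⟩
      rw [pow_one]
      refine ⟨?_, ?_⟩ <;> simp only [act] <;> nlinarith
    · exact ⟨0, Or.inl (by simp only [pow_zero, act_one]; exact ⟨hx, hy⟩)⟩

lemma eventually_signed {B : M2} (hB : PosM B) (hdet : B.det = 1)
    (z : ℤ × ℤ) (hz : z ≠ 0) :
    ∃ N, ∀ n, N ≤ n → SP (act (B ^ n) z) ∨ SP (-act (B ^ n) z) := by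
  obtain ⟨N, hN⟩ := eventually_signed_aux hB hdet (z.1.natAbs + z.2.natAbs) z le_rfl hz
  refine ⟨N, fun n hn => ?_⟩
  rcases hN with h | h
  · exact Or.inl (sp_stable hB h n hn)
  · refine Or.inr ?_
    rw [← act_neg] at h ⊢
    exact sp_stable hB h n hn

end LRW
namespace LRW

def MLinv : M2 := !![1, -1; 0, 1]
def MRinv : M2 := !![1, 0; -1, 1]

lemma ML_mul_MLinv : ML * MLinv = 1 := by
  simp [ML, MLinv, Matrix.mul_fin_two, Matrix.one_fin_two]
lemma MLinv_mul_ML : MLinv * ML = 1 := by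
  simp [ML, MLinv, Matrix.mul_fin_two, Matrix.one_fin_two]
lemma MR_mul_MRinv : MR * MRinv = 1 := by
  simp [MR, MRinv, Matrix.mul_fin_two, Matrix.one_fin_two]
lemma MRinv_mul_MR : MRinv * MR = 1 := by
  simp [MR, MRinv, Matrix.mul_fin_two, Matrix.one_fin_two]

/-- every nonnegative det-1 matrix is an LR word -/
lemma exists_word : ∀ (k : ℕ) (M : M2), NonnegM M → M.det = 1 →
    (M 0 0).natAbs + (M 0 1).natAbs + (M 1 0).natAbs + (M 1 1).natAbs ≤ k →
    ∃ V, M = word V := by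
  intro k
  induction k with
  | zero =>
    intro M hnn hdet hk
    exfalso
    rw [Matrix.det_fin_two] at hdet
    have h00 := hnn 0 0; have h01 := hnn 0 1; have h10 := hnn 1 0; have h11 := hnn 1 1
    have : M 0 0 = 0 ∧ M 0 1 = 0 ∧ M 1 0 = 0 ∧ M 1 1 = 0 := by omega
    rw [this.1, this.2.1, this.2.2.1, this.2.2.2] at hdet
    simp at hdet
  | succ k ih =>
    intro M hnn hdet hk
    have h00 := hnn 0 0; have h01 := hnn 0 1; have h10 := hnn 1 0; have h11 := hnn 1 1
    have hdet2 := hdet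
    rw [Matrix.det_fin_two] at hdet2
    by_cases hL : M 1 0 ≤ M 0 0 ∧ M 1 1 ≤ M 0 1
    · -- strip an L
      have hrow2 : ¬(M 1 0 = 0 ∧ M 1 1 = 0) := by
        intro hc; rw [hc.1, hc.2] at hdet2; omega
      set M' : M2 := MLinv * M with hM'
      have hM'e : M' = !![M 0 0 - M 1 0, M 0 1 - M 1 1; M 1 0, M 1 1] := by
        rw [hM', MLinv, Matrix.eta_fin_two M, Matrix.mul_fin_two]
        norm_num [sub_eq_add_neg]
      have hnn' : NonnegM M' := by
        rw [hM'e]; intro i j; fin_cases i <;> fin_cases j <;> simp <;> omega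
      have hdet' : M'.det = 1 := by
        rw [hM', Matrix.det_mul]
        have : MLinv.det = 1 := by simp [MLinv, Matrix.det_fin_two_of]
        rw [this, hdet, one_mul]
      obtain ⟨V, hV⟩ := ih M' hnn' hdet' (by rw [hM'e]; simp; omega)
      refine ⟨true :: V, ?_⟩
      rw [word_cons, ← hV]
      show M = ML * M'
      rw [hM', ← mul_assoc, ML_mul_MLinv, one_mul]
    · by_cases hR : M 0 0 ≤ M 1 0 ∧ M 0 1 ≤ M 1 1
      · -- strip an R
        have hrow1 : ¬(M 0 0 = 0 ∧ M 0 1 = 0) := by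
          intro hc; rw [hc.1, hc.2] at hdet2; omega
        set M' : M2 := MRinv * M with hM'
        have hM'e : M' = !![M 0 0, M 0 1; M 1 0 - M 0 0, M 1 1 - M 0 1] := by
          rw [hM', MRinv, Matrix.eta_fin_two M, Matrix.mul_fin_two]
          simp [sub_eq_add_neg]
          rw [add_comm (-(M 0 0)) (M 1 0), add_comm (-(M 0 1)) (M 1 1)]
          exact ⟨rfl, rfl⟩
        have hnn' : NonnegM M' := by
          rw [hM'e]; intro i j; fin_cases i <;> fin_cases j <;> simp <;> omega
        have hdet' : M'.det = 1 := by
          rw [hM', Matrix.det_mul]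
          have : MRinv.det = 1 := by simp [MRinv, Matrix.det_fin_two_of]
          rw [this, hdet, one_mul]
        obtain ⟨V, hV⟩ := ih M' hnn' hdet' (by rw [hM'e]; simp; omega)
        refine ⟨false :: V, ?_⟩
        rw [word_cons, ← hV]
        show M = MR * M'
        rw [hM', ← mul_assoc, MR_mul_MRinv, one_mul]
      · -- M = 1
        rw [not_and_or, not_le, not_le] at hL hR
        rcases hL with hL | hL <;> rcases hR with hR | hR
        · omega
        · -- M 0 0 < M 1 0 and M 1 1 < M 0 1 : impossible
          exfalso
          nlinarith [mul_le_mul (by omega : M 0 0 + 1 ≤ M 1 0)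
            (by omega : M 1 1 + 1 ≤ M 0 1) (by omega) (by omega)]
        · -- M 1 0 < M 0 0 and M 0 1 < M 1 1 : M = 1
          have key : M 0 1 + M 1 0 ≤ 0 := by
            nlinarith [mul_le_mul (by omega : M 1 0 + 1 ≤ M 0 0)
              (by omega : M 0 1 + 1 ≤ M 1 1) (by omega) (by omega)]
          have hb : M 0 1 = 0 := by omega
          have hc : M 1 0 = 0 := by omega
          have had : M 0 0 * M 1 1 = 1 := by rw [hb, hc] at hdet2; omega
          have ha1 : 1 ≤ M 0 0 := by nlinarith
          have hd1 : 1 ≤ M 1 1 := by nlinarith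
          have hsum : M 0 0 + M 1 1 ≤ 2 := by nlinarith
          refine ⟨[], ?_⟩
          rw [word_nil, Matrix.eta_fin_two M, hb, hc,
            (by omega : M 0 0 = 1), (by omega : M 1 1 = 1), Matrix.one_fin_two]
        · omega

/-- word is injective -/
lemma word_ne_one (b : Bool) (t : List Bool) : mat b * word t ≠ 1 := by
  intro h
  have hnn := nonneg_word t
  have h00 := hnn 0 0; have h01 := hnn 0 1; have h10 := hnn 1 0; have h11 := hnn 1 1
  cases b <;>
  · simp only [mat, cond_true, cond_false] at h
    rw [Matrix.eta_fin_two (word t)] at h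
    simp only [ML, MR, Matrix.mul_fin_two, Matrix.one_fin_two] at h
    rw [← Matrix.ext_iff] at h
    simp only [Fin.forall_fin_two, Matrix.cons_val_zero, Matrix.cons_val_one,
      Matrix.head_cons, Matrix.head_fin_const, Matrix.of_apply] at h
    omega

lemma word_injective : ∀ (u v : List Bool), word u = word v → u = v := by
  intro u
  induction u with
  | nil =>
    intro v h
    cases v with
    | nil => rfl
    | cons b t => exact absurd (by rw [← word_cons, ← h, word_nil] : mat b * word t = 1) (word_ne_one b t)
  | cons a s ihs =>
    intro v h
    cases v with
    | nil => exact absurd (by rw [← word_cons, h, word_nil] : mat a * word s = 1) (word_ne_one a s)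
    | cons b t =>
      rw [word_cons, word_cons] at h
      rcases Bool.eq_or_eq_not a b with rfl | rfl
      · -- same head: cancel
        have : word s = word t := by
          cases a
        -- false: MR
          · have := congrArg (fun X => MRinv * X) h
            simpa [mat, ← mul_assoc, MRinv_mul_MR] using this
          · have := congrArg (fun X => MLinv * X) h
            simpa [mat, ← mul_assoc, MLinv_mul_ML] using this
        rw [ihs t this]
      · -- different heads: contradiction
        exfalso
        have hdetS := det_word s
        have hdetT := det_word t
        have hnnS := nonneg_word s
        have hnnT := nonneg_word t
        cases b
        · -- a = true: ML * word s = MR * word t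
          simp only [Bool.not_false, mat, cond_true, cond_false] at h
          have h2 : word s = (MLinv * MR) * word t := by
            rw [mul_assoc, ← h, ← mul_assoc, MLinv_mul_ML, one_mul]
          have hc : MLinv * MR = !![0, -1; 1, 1] := by
            simp [MLinv, MR, Matrix.mul_fin_two]
          rw [hc] at h2
          rw [Matrix.eta_fin_two (word t)] at h2
          rw [Matrix.det_fin_two] at hdetT
          have e00 : word s 0 0 = -(word t 1 0) := by rw [h2]; simp [Matrix.mul_fin_two]
          have e01 : word s 0 1 = -(word t 1 1) := by rw [h2]; simp [Matrix.mul_fin_two]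
          have := hnnS 0 0; have := hnnS 0 1
          have := hnnT 1 0; have := hnnT 1 1
          have ht10 : word t 1 0 = 0 := by omega
          have ht11 : word t 1 1 = 0 := by omega
          rw [ht10, ht11] at hdetT; omega
        · -- a = false: MR * word s = ML * word t
          simp only [Bool.not_true, mat, cond_true, cond_false] at h
          have h2 : word s = (MRinv * ML) * word t := by
            rw [mul_assoc, ← h, ← mul_assoc, MRinv_mul_MR, one_mul]
          have hc : MRinv * ML = !![1, 1; -1, 0] := by
            simp [MRinv, ML, Matrix.mul_fin_two]
          rw [hc] at h2
          rw [Matrix.eta_fin_two (word t)] at h2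
          rw [Matrix.det_fin_two] at hdetT
          have e10 : word s 1 0 = -(word t 0 0) := by rw [h2]; simp [Matrix.mul_fin_two]
          have e11 : word s 1 1 = -(word t 0 1) := by rw [h2]; simp [Matrix.mul_fin_two]
          have := hnnS 1 0; have := hnnS 1 1
          have := hnnT 0 0; have := hnnT 0 1
          have ht00 : word t 0 0 = 0 := by omega
          have ht01 : word t 0 1 = 0 := by omega
          rw [ht00, ht01] at hdetT; omega

end LRW
namespace LRW

def blk (p : ℕ × ℕ) : List Bool := List.replicate p.1 true ++ List.replicate p.2 false
def flat (l : List (ℕ × ℕ)) : List Bool := l.flatMap blk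
def Valid (l : List (ℕ × ℕ)) : Prop := ∀ p ∈ l, 0 < p.1 ∧ 0 < p.2

@[simp] lemma flat_nil : flat [] = [] := rfl
@[simp] lemma flat_cons (p : ℕ × ℕ) (t : List (ℕ × ℕ)) : flat (p :: t) = blk p ++ flat t := rfl
lemma flat_append (u v : List (ℕ × ℕ)) : flat (u ++ v) = flat u ++ flat v := by
  simp [flat]

lemma blk_ne_nil {p : ℕ × ℕ} (hp : 0 < p.1) : blk p ≠ [] := by
  simp [blk]; omega

lemma flat_head {l : List (ℕ × ℕ)} (hV : Valid l) (hne : l ≠ []) :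
    (flat l).head? = some true := by
  cases l with
  | nil => exact absurd rfl hne
  | cons p t =>
    have hp := (hV p (by simp)).1
    simp [blk, List.head?_append, List.head?_replicate]
    omega

lemma flat_head' {l : List (ℕ × ℕ)} (hV : Valid l) : (flat l).head? ≠ some false := by
  cases l with
  | nil => simp
  | cons p t => rw [flat_head hV (by simp)]; simp

lemma flat_last {l : List (ℕ × ℕ)} (hV : Valid l) (hne : l ≠ []) :
    (flat l).getLast? = some false := by
  induction l with
  | nil => exact absurd rfl hne
  | cons p t ih =>
    rcases eq_or_ne t [] with rfl | ht
    · have hp := (hV p (by simp)).2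
      simp only [flat_cons, flat_nil, List.append_nil, blk]
      rw [List.getLast?_append_of_ne_nil _ (by simp; omega), List.getLast?_replicate]
      simp; omega
    · rw [flat_cons, List.getLast?_append_of_ne_nil _ ?h]
      · exact ih (fun q hq => hV q (by simp [hq])) ht
      · cases t with
        | nil => exact absurd rfl ht
        | cons q r => exact (List.append_ne_nil_of_left_ne_nil (blk_ne_nil (hV q (by simp)).1) _)

/-- uniqueness of a leading run -/
lemma run_unique : ∀ (a a' : ℕ) (x : Bool) (s s' : List Bool),
    s.head? ≠ some x → s'.head? ≠ some x →
    List.replicate a x ++ s = List.replicate a' x ++ s' → a = a' ∧ s = s' := by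
  intro a
  induction a with
  | zero =>
    intro a' x s s' hs hs' h
    cases a' with
    | zero => simpa using h
    | succ a' =>
      rw [List.replicate_succ] at h
      simp only [List.replicate_zero, List.nil_append, List.cons_append] at h
      rw [h] at hs
      simp at hs
  | succ a ih =>
    intro a' x s s' hs hs' h
    cases a' with
    | zero =>
      rw [List.replicate_succ] at h
      simp only [List.replicate_zero, List.nil_append, List.cons_append] at h
      rw [← h] at hs'
      simp at hs'
    | succ a' =>
      rw [List.replicate_succ, List.replicate_succ] at h
      simp only [List.cons_append, List.cons.injEq] at h
      obtain ⟨n1, n2⟩ := ih a' x s s' hs hs' h.2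
      exact ⟨by omega, n2⟩

lemma flat_inj : ∀ (xs ys : List (ℕ × ℕ)), Valid xs → Valid ys →
    flat xs = flat ys → xs = ys := by
  intro xs
  induction xs with
  | nil =>
    intro ys _ hys h
    cases ys with
    | nil => rfl
    | cons p t =>
      exfalso
      rw [flat_nil, flat_cons] at h
      exact (List.append_ne_nil_of_left_ne_nil (blk_ne_nil (hys p (by simp)).1) _) h.symm
  | cons p t ih =>
    intro ys hxs hys h
    cases ys with
    | nil =>
      exfalso
      rw [flat_nil, flat_cons] at h
      exact (List.append_ne_nil_of_left_ne_nil (blk_ne_nil (hxs p (by simp)).1) _) h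
    | cons q s =>
      obtain ⟨m, n⟩ := p
      obtain ⟨m', n'⟩ := q
      have hm := hxs (m, n) (by simp)
      have hm' := hys (m', n') (by simp)
      simp only [flat_cons, blk, List.append_assoc] at h
      have h1 := run_unique m m' true _ _ ?hs ?hs' h
      case hs =>
        rw [List.head?_append, List.head?_replicate]
        have : 0 < n := hm.2
        simp; omega
      case hs' =>
        rw [List.head?_append, List.head?_replicate]
        have : 0 < n' := hm'.2
        simp; omega
      have h2 := run_unique n n' false _ _ ?ht ?ht'  h1.2
      case ht => exact flat_head' (fun q hq => hxs q (by simp [hq]))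
      case ht' => exact flat_head' (fun q hq => hys q (by simp [hq]))
      have := ih s (fun q hq => hxs q (by simp [hq])) (fun q hq => hys q (by simp [hq])) h2.2
      rw [h1.1, h2.1, this]

/-- parsing an R-run -/
lemma parseR : ∀ (k : ℕ) (V : List Bool), V.length ≤ k →
    V.head? = some false → V.getLast? = some false →
    ∃ (b : ℕ) (V' : List Bool), 0 < b ∧ V = List.replicate b false ++ V' ∧
      (V' = [] ∨ (V'.head? = some true ∧ V'.getLast? = some false)) := by
  intro k
  induction k with
  | zero =>
    intro V hk hh _
    rw [show V = [] from List.eq_nil_of_length_eq_zero (by omega)] at hh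
    simp at hh
  | succ k ih =>
    intro V hk hh hl
    cases V with
    | nil => simp at hh
    | cons c V₁ =>
      have hc : c = false := by simpa using hh
      subst hc
      cases V₁ with
      | nil => exact ⟨1, [], by omega, by simp, Or.inl rfl⟩
      | cons c₂ V₂ =>
        cases c₂ with
        | false =>
          have hl₁ : (false :: V₂).getLast? = some false := by
            rwa [List.getLast?_cons_cons] at hl
          obtain ⟨b, V', hb, hV, hV'⟩ := ih (false :: V₂) (by simpa using hk) (by simp) hl₁
          exact ⟨b + 1, V', by omega, by rw [List.replicate_succ, List.cons_append, ← hV], hV'⟩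
        | true =>
          refine ⟨1, true :: V₂, by omega, by simp, Or.inr ⟨by simp, ?_⟩⟩
          rwa [List.getLast?_cons_cons] at hl

/-- parsing a word that starts with L and ends with R into blocks -/
lemma parse : ∀ (k : ℕ) (V : List Bool), V.length ≤ k →
    V.head? = some true → V.getLast? = some false →
    ∃ vs, vs ≠ [] ∧ Valid vs ∧ V = flat vs := by
  intro k
  induction k with
  | zero =>
    intro V hk hh _
    rw [show V = [] from List.eq_nil_of_length_eq_zero (by omega)] at hh
    simp at hh
  | succ k ih =>
    intro V hk hh hl
    cases V with
    | nil => simp at hh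
    | cons c V₁ =>
      have hc : c = true := by simpa using hh
      subst hc
      cases V₁ with
      | nil => simp at hl
      | cons c₂ V₂ =>
        have hl₁ : (c₂ :: V₂).getLast? = some false := by
          rwa [List.getLast?_cons_cons] at hl
        cases c₂ with
        | true =>
          obtain ⟨vs, hne, hval, hV⟩ := ih (true :: V₂) (by simpa using hk) (by simp) hl₁
          cases vs with
          | nil => exact absurd rfl hne
          | cons p rest =>
            obtain ⟨m, n⟩ := p
            refine ⟨(m + 1, n) :: rest, by simp, ?_, ?_⟩
            · intro q hq
              rcases List.mem_cons.mp hq with rfl | hq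
              · exact ⟨by omega, (hval (m, n) (by simp)).2⟩
              · exact hval q (by simp [hq])
            · rw [show true :: true :: V₂ = true :: (true :: V₂) from rfl, hV]
              simp [flat_cons, blk, List.replicate_succ, List.append_assoc]
        | false =>
          obtain ⟨b, V', hb, hV, hV'⟩ := parseR (k) (false :: V₂) (by simpa using hk) (by simp) hl₁
          rcases hV' with rfl | ⟨hh', hl'⟩
          · refine ⟨[(1, b)], by simp, ?_, ?_⟩
            · intro q hq
              simp only [List.mem_singleton] at hq
              rw [hq]; exact ⟨one_pos, hb⟩
            · rw [show true :: false :: V₂ = true :: (false :: V₂) from rfl, hV,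
                List.append_nil]
              simp [flat, blk, List.replicate_succ]
          · have hlen : V'.length ≤ k := by
              have h3 := congrArg List.length hV
              simp only [List.length_cons, List.length_append, List.length_replicate] at h3
              have hk' : V₂.length + 2 ≤ k + 1 := by simpa using hk
              omega
            obtain ⟨vs, hne, hval, hVp⟩ := ih V' hlen hh' hl'
            refine ⟨(1, b) :: vs, by simp, ?_, ?_⟩
            · intro q hq
              rcases List.mem_cons.mp hq with rfl | hq
              · exact ⟨by omega, hb⟩
              · exact hval q hq
            · rw [flat_cons, blk, hV, ← hVp]
              simp

/-- the conjugation equation in a free monoid gives a rotation -/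
lemma rot_of_eq {α : Type*} : ∀ (k : ℕ) (C A B : List α), C.length ≤ k → A ≠ [] →
    A ++ C = C ++ B → B = A.rotate (C.length % A.length) := by
  intro k
  induction k with
  | zero =>
    intro C A B hk hA h
    have hCnil : C = [] := List.eq_nil_of_length_eq_zero (by omega)
    subst hCnil
    simp only [List.append_nil, List.nil_append] at h
    simp [← h]
  | succ k ih =>
    intro C A B hk hA h
    rcases le_or_gt C.length A.length with hle | hlt
    · -- C is a prefix of A
      have hC : C = A.take C.length := by
        have := congrArg (List.take C.length) h
        rw [List.take_append_of_le_length hle, List.take_left] at this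
        exact this.symm
      have hA2 : A = C ++ A.drop C.length := by
        conv_lhs => rw [← List.take_append_drop C.length A]
        rw [← hC]
      have hB : B = A.drop C.length ++ C := by
        have h2 : C ++ (A.drop C.length ++ C) = C ++ B := by
          rw [← List.append_assoc, ← hA2, h]
        exact (List.append_cancel_left h2).symm
      rcases eq_or_lt_of_le hle with heq | hlt2
      · rw [heq, Nat.mod_self, List.rotate_zero, hB, heq, List.drop_length, List.nil_append, hC, heq, List.take_length]
      · rw [Nat.mod_eq_of_lt hlt2, List.rotate_eq_drop_append_take hle, hB, ← hC]
    · -- A is a prefix of C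
      have hA2 : A = C.take A.length := by
        have := congrArg (List.take A.length) h
        rwa [List.take_left, List.take_append_of_le_length (le_of_lt hlt)] at this
      have hC2 : C = A ++ C.drop A.length := by
        conv_lhs => rw [← List.take_append_drop A.length C]
        rw [← hA2]
      set C' := C.drop A.length with hC'
      have h2 : A ++ C' = C' ++ B := by
        have : A ++ (A ++ C') = A ++ (C' ++ B) := by
          conv_lhs => rw [← hC2]
          rw [h, hC2, List.append_assoc]
        exact List.append_cancel_left this
      have hlen : C'.length ≤ k := by
        have hAl : 0 < A.length := List.length_pos_iff.mpr hA
        simp only [hC', List.length_drop]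
        omega
      have := ih C' A B hlen hA h2
      rw [this]
      congr 1
      have hAl : 0 < A.length := List.length_pos_iff.mpr hA
      have : C.length = C'.length + A.length := by
        simp only [hC', List.length_drop]; omega
      rw [this, Nat.add_mod_right]

end LRW
namespace LRW

lemma word_rep_true (k : ℕ) : word (List.replicate k true) = ML ^ k := by
  induction k with
  | zero => simp
  | succ k ih => rw [List.replicate_succ, word_cons, ih, pow_succ']
                 simp [mat]
lemma word_rep_false (k : ℕ) : word (List.replicate k false) = MR ^ k := by
  induction k with
  | zero => simp
  | succ k ih => rw [List.replicate_succ, word_cons, ih, pow_succ']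
                 simp [mat]

lemma word_blk (p : ℕ × ℕ) : word (blk p) = ML ^ p.1 * MR ^ p.2 := by
  rw [blk, word_append, word_rep_true, word_rep_false]

lemma word_flat (l : List (ℕ × ℕ)) :
    word (flat l) = (l.map (fun p => ML ^ p.1 * MR ^ p.2)).prod := by
  induction l with
  | nil => simp
  | cons p t ih => rw [flat_cons, word_append, word_blk, List.map_cons, List.prod_cons, ih]

lemma flat_ne_nil {l : List (ℕ × ℕ)} (hV : Valid l) (hne : l ≠ []) : flat l ≠ [] := by
  cases l with
  | nil => exact absurd rfl hne
  | cons p t =>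
    rw [flat_cons]
    exact List.append_ne_nil_of_left_ne_nil (blk_ne_nil (hV p (by simp)).1) _

lemma act_e1 (M : M2) : act M (1, 0) = (M 0 0, M 1 0) := by simp [act]
lemma act_e2 (M : M2) : act M (0, 1) = (M 0 1, M 1 1) := by simp [act]

lemma sp_pair {a b : ℤ} : SP (a, b) ↔ 0 < a ∧ 0 < b := Iff.rfl
lemma sp_neg_pair {a b : ℤ} : SP (-(a, b)) ↔ a < 0 ∧ b < 0 := by
  show 0 < -a ∧ 0 < -b ↔ _
  omega

end LRW
open Matrix LRW in
theorem LR_word_conjugate_iff_cyclic_rotation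
    (ℓ ℓ' : ℕ) (hℓ : 1 ≤ ℓ) (hℓ' : 1 ≤ ℓ')
    (m n : Fin ℓ → ℕ) (hm : ∀ i, 0 < m i) (hn : ∀ i, 0 < n i)
    (m' n' : Fin ℓ' → ℕ) (hm' : ∀ i, 0 < m' i) (hn' : ∀ i, 0 < n' i)
    (P : Matrix.SpecialLinearGroup (Fin 2) ℤ)
    (hconj : (P : Matrix (Fin 2) (Fin 2) ℤ) *
        (List.ofFn fun i : Fin ℓ => ML ^ (m i) * MR ^ (n i)).prod *
        ((P⁻¹ : Matrix.SpecialLinearGroup (Fin 2) ℤ) : Matrix (Fin 2) (Fin 2) ℤ) =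
        (List.ofFn fun i : Fin ℓ' => ML ^ (m' i) * MR ^ (n' i)).prod) :
    ℓ = ℓ' ∧ ∃ j < ℓ,
      List.ofFn (fun i : Fin ℓ' => (m' i, n' i)) =
        (List.ofFn (fun i : Fin ℓ => (m i, n i))).rotate j := by
  classical
  set xs : List (ℕ × ℕ) := List.ofFn (fun i : Fin ℓ => (m i, n i)) with hxs
  set ys : List (ℕ × ℕ) := List.ofFn (fun i : Fin ℓ' => (m' i, n' i)) with hys
  have hxval : Valid xs := by
    intro p hp
    rw [hxs, List.mem_ofFn] at hp
    obtain ⟨i, rfl⟩ := hp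
    exact ⟨hm i, hn i⟩
  have hyval : Valid ys := by
    intro p hp
    rw [hys, List.mem_ofFn] at hp
    obtain ⟨i, rfl⟩ := hp
    exact ⟨hm' i, hn' i⟩
  have hxlen : xs.length = ℓ := by rw [hxs, List.length_ofFn]
  have hylen : ys.length = ℓ' := by rw [hys, List.length_ofFn]
  have hxne : xs ≠ [] := List.length_pos_iff.mp (by omega)
  have hyne : ys ≠ [] := List.length_pos_iff.mp (by omega)
  have hAeq : (List.ofFn fun i : Fin ℓ => ML ^ (m i) * MR ^ (n i)).prod = word (flat xs) := by
    rw [word_flat, hxs, List.map_ofFn]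
    rfl
  have hBeq : (List.ofFn fun i : Fin ℓ' => ML ^ (m' i) * MR ^ (n' i)).prod = word (flat ys) := by
    rw [word_flat, hys, List.map_ofFn]
    rfl
  rw [hAeq, hBeq] at hconj
  set A : M2 := word (flat xs) with hA
  set B : M2 := word (flat ys) with hB
  -- basic properties
  have hApos : PosM A := by
    rw [hA, word_flat]
    refine pos_prod _ ?_ ?_
    · intro hcon
      rw [List.map_eq_nil_iff] at hcon
      exact hxne hcon
    · intro M hM
      rw [List.mem_map] at hM
      obtain ⟨p, hp, rfl⟩ := hM
      exact blk_pos (hxval p hp).1 (hxval p hp).2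
  have hBpos : PosM B := by
    rw [hB, word_flat]
    refine pos_prod _ ?_ ?_
    · intro hcon
      rw [List.map_eq_nil_iff] at hcon
      exact hyne hcon
    · intro M hM
      rw [List.mem_map] at hM
      obtain ⟨p, hp, rfl⟩ := hM
      exact blk_pos (hyval p hp).1 (hyval p hp).2
  have hATpos : PosM Aᵀ := pos_transpose hApos
  have hdetA : A.det = 1 := by rw [hA]; exact det_word _
  have hdetB : B.det = 1 := by rw [hB]; exact det_word _
  have hdetAT : (Aᵀ).det = 1 := by rw [Matrix.det_transpose]; exact hdetA
  have hdetP : (P : M2).det = 1 := P.prop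
  -- conjugation equations
  have hPinv : ((P⁻¹ : Matrix.SpecialLinearGroup (Fin 2) ℤ) : M2) * (P : M2) = 1 := by
    rw [← Matrix.SpecialLinearGroup.coe_mul, inv_mul_cancel,
      Matrix.SpecialLinearGroup.coe_one]
  have hPA : (P : M2) * A = B * (P : M2) := by
    conv_lhs => rw [← mul_one ((P : M2) * A), ← hPinv, ← mul_assoc]
    rw [hconj]
  have hPApow : ∀ k : ℕ, (P : M2) * A ^ k = B ^ k * (P : M2) := by
    intro k
    induction k with
    | zero => simp
    | succ k ih => rw [pow_succ, pow_succ, ← mul_assoc, ih, mul_assoc, hPA, ← mul_assoc]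
  -- nonzero columns and rows of P
  have hCol1 : act (P : M2) (1, 0) ≠ 0 := by
    rw [act_e1]
    intro hcon
    rw [Prod.ext_iff] at hcon
    simp only [Prod.fst_zero, Prod.snd_zero] at hcon
    rw [Matrix.det_fin_two, hcon.1, hcon.2] at hdetP
    simp at hdetP
  have hCol2 : act (P : M2) (0, 1) ≠ 0 := by
    rw [act_e2]
    intro hcon
    rw [Prod.ext_iff] at hcon
    simp only [Prod.fst_zero, Prod.snd_zero] at hcon
    rw [Matrix.det_fin_two, hcon.1, hcon.2] at hdetP
    simp at hdetP
  have hRow1 : act ((P : M2)ᵀ) (1, 0) ≠ 0 := by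
    rw [act_e1]
    intro hcon
    rw [Prod.ext_iff] at hcon
    simp only [Prod.fst_zero, Prod.snd_zero, Matrix.transpose_apply] at hcon
    rw [Matrix.det_fin_two, hcon.1, hcon.2] at hdetP
    simp at hdetP
  -- eventual positivity
  obtain ⟨N₁, hN₁⟩ := eventually_signed hBpos hdetB (act (P : M2) (1, 0)) hCol1
  obtain ⟨N₂, hN₂⟩ := eventually_signed hBpos hdetB (act (P : M2) (0, 1)) hCol2
  obtain ⟨N₃, hN₃⟩ := eventually_signed hATpos hdetAT (act ((P : M2)ᵀ) (1, 0)) hRow1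
  set N := max (max N₁ N₂) N₃ with hNdef
  set Q : M2 := B ^ N * (P : M2) with hQ
  have hQ' : Q = (P : M2) * A ^ N := by rw [hQ, ← hPApow N]
  have e1 : act (B ^ N) (act (P : M2) (1, 0)) = (Q 0 0, Q 1 0) := by
    rw [← act_mul, ← hQ, act_e1]
  have e2 : act (B ^ N) (act (P : M2) (0, 1)) = (Q 0 1, Q 1 1) := by
    rw [← act_mul, ← hQ, act_e2]
  have hQT : (Aᵀ) ^ N * ((P : M2)ᵀ) = Qᵀ := by
    rw [← Matrix.transpose_pow, ← Matrix.transpose_mul, ← hQ']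
  have e3 : act ((Aᵀ) ^ N) (act ((P : M2)ᵀ) (1, 0)) = (Q 0 0, Q 0 1) := by
    rw [← act_mul, hQT, act_e1]
    simp [Matrix.transpose_apply]
  have hs1 := hN₁ N (by simp only [hNdef]; omega)
  have hs2 := hN₂ N (by simp only [hNdef]; omega)
  have hs3 := hN₃ N (by simp only [hNdef]; omega)
  rw [e1, sp_pair, sp_neg_pair] at hs1
  rw [e2, sp_pair, sp_neg_pair] at hs2
  rw [e3, sp_pair, sp_neg_pair] at hs3
  have hsigns : (1 ≤ Q 0 0 ∧ 1 ≤ Q 0 1 ∧ 1 ≤ Q 1 0 ∧ 1 ≤ Q 1 1) ∨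
      (Q 0 0 ≤ -1 ∧ Q 0 1 ≤ -1 ∧ Q 1 0 ≤ -1 ∧ Q 1 1 ≤ -1) := by
    rcases hs1 with ⟨a1, a2⟩ | ⟨a1, a2⟩ <;> rcases hs2 with ⟨b1, b2⟩ | ⟨b1, b2⟩ <;>
      rcases hs3 with ⟨c1, c2⟩ | ⟨c1, c2⟩ <;> omega
  have hdetQ : Q.det = 1 := by
    rw [hQ, Matrix.det_mul, Matrix.det_pow, hdetB, one_pow, hdetP, one_mul]
  have hQA : Q * A = B * Q := by
    calc Q * A = (P : M2) * A ^ N * A := by rw [hQ']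
      _ = (P : M2) * A ^ (N + 1) := by rw [mul_assoc, ← pow_succ]
      _ = B ^ (N + 1) * (P : M2) := hPApow (N + 1)
      _ = B * (B ^ N * (P : M2)) := by rw [pow_succ', mul_assoc]
      _ = B * Q := by rw [← hQ]
  -- extract the word equation
  obtain ⟨V, hlist⟩ : ∃ V, V ++ flat xs = flat ys ++ V := by
    rcases hsigns with hpos | hneg
    · have hQnn : NonnegM Q := by
        show ∀ i j, 0 ≤ Q i j
        simp only [Fin.forall_fin_two]
        omega
      obtain ⟨V, hV⟩ := exists_word _ Q hQnn hdetQ le_rfl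
      refine ⟨V, word_injective _ _ ?_⟩
      rw [word_append, word_append, ← hA, ← hB, ← hV]
      exact hQA
    · have hQnn : NonnegM (-Q) := by
        show ∀ i j, 0 ≤ (-Q) i j
        simp only [Matrix.neg_apply, Fin.forall_fin_two]
        omega
      have hdetQ' : (-Q).det = 1 := by
        rw [Matrix.det_neg, hdetQ]
        norm_num
      obtain ⟨V, hV⟩ := exists_word _ (-Q) hQnn hdetQ' le_rfl
      refine ⟨V, word_injective _ _ ?_⟩
      rw [word_append, word_append, ← hA, ← hB, ← hV]
      rw [neg_mul, hQA, mul_neg]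
  -- combinatorial conclusion
  have hfxne : flat xs ≠ [] := flat_ne_nil hxval hxne
  rcases eq_or_ne V [] with rfl | hVne
  · simp only [List.nil_append, List.append_nil] at hlist
    have hxy : xs = ys := flat_inj xs ys hxval hyval hlist
    constructor
    · rw [← hxlen, ← hylen, hxy]
    · exact ⟨0, by omega, by rw [List.rotate_zero, hxy]⟩
  · have hhead : V.head? = some true := by
      have h1 := congrArg List.head? hlist
      rw [List.head?_append, List.head?_append, flat_head hyval hyne] at h1
      cases V with
      | nil => exact absurd rfl hVne
      | cons c t =>
        simp only [List.head?_cons, Option.or_some, Option.some_or, Option.getD_some] at h1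
        rw [List.head?_cons, h1]
    have hlast : V.getLast? = some false := by
      have h1 := congrArg List.getLast? hlist
      rw [List.getLast?_append_of_ne_nil _ hfxne,
        List.getLast?_append_of_ne_nil _ hVne, flat_last hxval hxne] at h1
      exact h1.symm
    obtain ⟨vs, hvsne, hvsval, rfl⟩ := parse V.length V le_rfl hhead hlast
    have hblocks : ys ++ vs = vs ++ xs := by
      refine flat_inj _ _ ?_ ?_ ?_
      · intro p hp
        rcases List.mem_append.mp hp with h | h
        · exact hyval p h
        · exact hvsval p h
      · intro p hp
        rcases List.mem_append.mp hp with h | h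
        · exact hvsval p h
        · exact hxval p h
      · rw [flat_append, flat_append, hlist]
    have hrot := rot_of_eq vs.length vs ys xs le_rfl hyne hblocks
    -- hrot : xs = ys.rotate (vs.length % ys.length)
    have hlenxy : xs.length = ys.length := by
      have h2 := congrArg List.length hrot
      rw [List.length_rotate] at h2
      exact h2
    have hll : ℓ = ℓ' := by omega
    refine ⟨hll, ?_⟩
    set j0 := vs.length % ys.length with hj0
    have hj0lt : j0 < ℓ' := by
      rw [hj0, hylen]
      exact Nat.mod_lt _ (by omega)
    refine ⟨(ℓ' - j0) % ℓ, Nat.mod_lt _ (by omega), ?_⟩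
    have h1 : xs.rotate ((ℓ' - j0) % ℓ) = xs.rotate (ℓ' - j0) := by
      rw [show ℓ = xs.length from hxlen.symm]
      exact List.rotate_mod _ _
    rw [h1, hrot, List.rotate_rotate, show j0 + (ℓ' - j0) = ℓ' from by omega, ← hylen,
      List.rotate_length]
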